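/- Let G be a group, p a prime and m ≥ 1. Let ρ, ρ' : G → GSp₄(ℤ/p^{m+1}ℤ) be group homomorphisms whose reductions modulo p^m coincide and which satisfy ν ∘ ρ = ν ∘ ρ'. Then there is a unique function h : G → sp₄(𝔽_p) such that ρ(σ) = (1 + p^m·h̃(σ))·ρ'(σ) for all σ ∈ G (h̃(σ) denoting any lift of h(σ)), and h is a 1-cocycle for the adjoint action of the mod-p reduction ρ̄ of ρ: h(στ) = h(σ) + ρ̄(σ)·h(τ)·ρ̄(σ)⁻¹ for all σ, τ ∈ G. -/

import Mathlib

open Matrix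

/-- The 4×4 matrix `J` given in 2×2 blocks by `[[0, I₂], [−I₂, 0]]`. -/
def Jmat (R : Type*) [CommRing R] : Matrix (Fin 4) (Fin 4) R :=
  !![0, 0, 1, 0; 0, 0, 0, 1; -1, 0, 0, 0; 0, -1, 0, 0]

section Aux

variable {p m : ℕ} [hp : Fact p.Prime]

private lemma aux_kill (z : ZMod (p ^ (m + 1)))
    (hz : (p : ZMod (p ^ (m + 1))) ^ m * z = 0) (hd : p ∣ p ^ (m + 1)) :
    ZMod.castHom hd (ZMod p) z = 0 := by
  haveI : NeZero (p ^ (m + 1)) := ⟨pow_ne_zero _ hp.out.ne_zero⟩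
  have hzv : ((z.val : ℕ) : ZMod (p ^ (m + 1))) = z := ZMod.natCast_rightInverse z
  have h0 : ((p ^ m * z.val : ℕ) : ZMod (p ^ (m + 1))) = 0 := by push_cast [hzv]; exact hz
  rw [ZMod.natCast_eq_zero_iff] at h0
  have h0' : p ^ m * p ∣ p ^ m * z.val := by rw [← pow_succ]; exact h0
  have hdvd : p ∣ z.val := (Nat.mul_dvd_mul_iff_left (pow_pos hp.out.pos m)).mp h0'
  rw [ZMod.castHom_apply, ← ZMod.natCast_val]
  exact (ZMod.natCast_eq_zero_iff _ _).mpr hdvd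

private lemma aux_lift (x : ZMod (p ^ (m + 1))) (hx : p ^ m ∣ x.val) :
    ∃ a : ZMod p, (p : ZMod (p ^ (m + 1))) ^ m * ((a.val : ℕ) : ZMod (p ^ (m + 1))) = x := by
  haveI : NeZero (p ^ (m + 1)) := ⟨pow_ne_zero _ hp.out.ne_zero⟩
  refine ⟨((x.val / p ^ m : ℕ) : ZMod p), ?_⟩
  have hlt : x.val / p ^ m < p := by
    rw [Nat.div_lt_iff_lt_mul (pow_pos hp.out.pos m)]
    calc x.val < p ^ (m + 1) := ZMod.val_lt x
      _ = p * p ^ m := by ring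
  rw [ZMod.val_natCast_of_lt hlt]
  calc (p : ZMod (p ^ (m + 1))) ^ m * ((x.val / p ^ m : ℕ) : ZMod (p ^ (m + 1)))
      = ((p ^ m * (x.val / p ^ m) : ℕ) : ZMod (p ^ (m + 1))) := by push_cast; ring
    _ = ((x.val : ℕ) : ZMod (p ^ (m + 1))) := by rw [Nat.mul_div_cancel' hx]
    _ = x := ZMod.natCast_rightInverse x

private lemma aux_csq (hm : 1 ≤ m) :
    (p : ZMod (p ^ (m + 1))) ^ m * (p : ZMod (p ^ (m + 1))) ^ m = 0 := by
  haveI : NeZero (p ^ (m + 1)) := ⟨pow_ne_zero _ hp.out.ne_zero⟩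
  have h0 : ((p ^ m * p ^ m : ℕ) : ZMod (p ^ (m + 1))) = 0 := by
    rw [ZMod.natCast_eq_zero_iff, ← pow_add]
    exact pow_dvd_pow p (by omega)
  push_cast at h0
  exact h0

private lemma aux_dvd_val (x : ZMod (p ^ (m + 1))) (hd : p ^ m ∣ p ^ (m + 1))
    (hx : ZMod.castHom hd (ZMod (p ^ m)) x = 0) : p ^ m ∣ x.val := by
  haveI : NeZero (p ^ (m + 1)) := ⟨pow_ne_zero _ hp.out.ne_zero⟩
  haveI : NeZero (p ^ m) := ⟨pow_ne_zero _ hp.out.ne_zero⟩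
  rw [ZMod.castHom_apply, ← ZMod.natCast_val] at hx
  exact (ZMod.natCast_eq_zero_iff _ _).mp hx

private lemma mapm_sub {α β : Type*} [CommRing α] [CommRing β] (f : α →+* β)
    (X Y : Matrix (Fin 4) (Fin 4) α) : (X - Y).map f = X.map f - Y.map f := by
  ext i j; simp [Matrix.map_apply]

private lemma mapm_add {α β : Type*} [CommRing α] [CommRing β] (f : α →+* β)
    (X Y : Matrix (Fin 4) (Fin 4) α) : (X + Y).map f = X.map f + Y.map f := by
  ext i j; simp [Matrix.map_apply]

private lemma mapm_one {α β : Type*} [CommRing α] [CommRing β] (f : α →+* β) :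
    (1 : Matrix (Fin 4) (Fin 4) α).map f = 1 :=
  Matrix.map_one _ (map_zero f) (map_one f)

end Aux

/-- If `ρ, ρ' : G → GSp₄(ℤ/p^{m+1}ℤ)` are homomorphisms with the same reduction
mod `p^m` and the same similitude character, then there is a unique function
`h : G → sp₄(𝔽_p)` with `ρ(σ) = (1 + p^m·h̃(σ))·ρ'(σ)`, and any such `h` is a
1-cocycle for the adjoint action of the mod-`p` reduction `ρ̄` of `ρ`. -/
theorem difference_of_lifts_is_cocycle (p : ℕ) [Fact p.Prime] (m : ℕ) (hm : 1 ≤ m)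
    (G : Type*) [Group G]
    (ρ ρ' : G → Matrix (Fin 4) (Fin 4) (ZMod (p ^ (m + 1))))
    (hρone : ρ 1 = 1) (hρ'one : ρ' 1 = 1)
    (hρmul : ∀ σ τ : G, ρ (σ * τ) = ρ σ * ρ τ)
    (hρ'mul : ∀ σ τ : G, ρ' (σ * τ) = ρ' σ * ρ' τ)
    (hν : ∀ σ : G, ∃ u : (ZMod (p ^ (m + 1)))ˣ,
      (ρ σ)ᵀ * Jmat (ZMod (p ^ (m + 1))) * ρ σ
          = (u : ZMod (p ^ (m + 1))) • Jmat (ZMod (p ^ (m + 1))) ∧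
      (ρ' σ)ᵀ * Jmat (ZMod (p ^ (m + 1))) * ρ' σ
          = (u : ZMod (p ^ (m + 1))) • Jmat (ZMod (p ^ (m + 1))))
    (hred : ∀ σ : G,
      (ρ σ).map (ZMod.castHom (pow_dvd_pow p (by omega : m ≤ m + 1)) (ZMod (p ^ m)))
        = (ρ' σ).map (ZMod.castHom (pow_dvd_pow p (by omega : m ≤ m + 1)) (ZMod (p ^ m)))) :
    (∃! h : G → Matrix (Fin 4) (Fin 4) (ZMod p),
      (∀ σ : G, (h σ)ᵀ * Jmat (ZMod p) + Jmat (ZMod p) * h σ = 0) ∧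
      (∀ σ : G,
        ρ σ = (1 + ((p : ZMod (p ^ (m + 1))) ^ m) •
            (h σ).map (fun x => (x.val : ZMod (p ^ (m + 1))))) * ρ' σ)) ∧
    (∀ h : G → Matrix (Fin 4) (Fin 4) (ZMod p),
      ((∀ σ : G, (h σ)ᵀ * Jmat (ZMod p) + Jmat (ZMod p) * h σ = 0) ∧
       (∀ σ : G,
        ρ σ = (1 + ((p : ZMod (p ^ (m + 1))) ^ m) •
            (h σ).map (fun x => (x.val : ZMod (p ^ (m + 1))))) * ρ' σ)) →
      ∀ σ τ : G,
        h (σ * τ)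
          = h σ +
            (ρ σ).map (ZMod.castHom (dvd_pow_self p (by omega : m + 1 ≠ 0)) (ZMod p)) * h τ *
              ((ρ σ).map
                (ZMod.castHom (dvd_pow_self p (by omega : m + 1 ≠ 0)) (ZMod p)))⁻¹) := by
  classical
  haveI : NeZero (p ^ (m + 1)) := ⟨pow_ne_zero _ (Fact.out : p.Prime).ne_zero⟩
  set c : ZMod (p ^ (m + 1)) := (p : ZMod (p ^ (m + 1))) ^ m with hc
  set lift : ZMod p → ZMod (p ^ (m + 1)) := fun x => (x.val : ZMod (p ^ (m + 1))) with hlift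
  set π : ZMod (p ^ (m + 1)) →+* ZMod p :=
    ZMod.castHom (dvd_pow_self p (by omega : m + 1 ≠ 0)) (ZMod p) with hπ
  set πm : ZMod (p ^ (m + 1)) →+* ZMod (p ^ m) :=
    ZMod.castHom (pow_dvd_pow p (by omega : m ≤ m + 1)) (ZMod (p ^ m)) with hπm
  have hcsq : c * c = 0 := aux_csq hm
  -- group-theoretic inverses
  have hρinv : ∀ σ : G, ρ σ * ρ σ⁻¹ = 1 := fun σ => by rw [← hρmul]; simp [hρone]
  have hρinv' : ∀ σ : G, ρ σ⁻¹ * ρ σ = 1 := fun σ => by rw [← hρmul]; simp [hρone]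
  have hρ'inv : ∀ σ : G, ρ' σ * ρ' σ⁻¹ = 1 := fun σ => by rw [← hρ'mul]; simp [hρ'one]
  have hρ'inv' : ∀ σ : G, ρ' σ⁻¹ * ρ' σ = 1 := fun σ => by rw [← hρ'mul]; simp [hρ'one]
  -- basic facts about π and lift
  have hπlift : ∀ a : ZMod p, π (lift a) = a := by
    intro a
    rw [hlift, map_natCast]
    exact ZMod.natCast_rightInverse a
  have hπliftM : ∀ A : Matrix (Fin 4) (Fin 4) (ZMod p), (A.map lift).map π = A := by
    intro A; ext i j; simp [Matrix.map_apply, hπlift]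
  have hπJ : (Jmat (ZMod (p ^ (m + 1)))).map π = Jmat (ZMod p) := by
    ext i j
    fin_cases i <;> fin_cases j <;>
      simp [Jmat, Matrix.map_apply, Matrix.vecHead, Matrix.vecTail]
  -- killing lemma, matrix version
  have h1M : ∀ M : Matrix (Fin 4) (Fin 4) (ZMod (p ^ (m + 1))), c • M = 0 → M.map π = 0 := by
    intro M hM
    ext i j
    have hMij : c * M i j = 0 := by
      have := congrFun (congrFun hM i) j
      simpa using this
    simpa [Matrix.map_apply, hπ] using aux_kill (M i j) hMij (dvd_pow_self p (by omega : m + 1 ≠ 0))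
  have hcancel : ∀ X Y : Matrix (Fin 4) (Fin 4) (ZMod (p ^ (m + 1))),
      c • X = c • Y → X.map π = Y.map π := by
    intro X Y hXY
    have h0 : c • (X - Y) = 0 := by rw [smul_sub, hXY, sub_self]
    have := h1M _ h0
    rw [mapm_sub] at this
    exact sub_eq_zero.mp this
  have hcancelLift : ∀ A B : Matrix (Fin 4) (Fin 4) (ZMod p),
      c • A.map lift = c • B.map lift → A = B := by
    intro A B hAB
    have := hcancel _ _ hAB
    rwa [hπliftM, hπliftM] at this
  -- existence of lifts of the difference, matrix version
  have h2M : ∀ M : Matrix (Fin 4) (Fin 4) (ZMod (p ^ (m + 1))), M.map πm = 0 →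
      ∃ A : Matrix (Fin 4) (Fin 4) (ZMod p), c • A.map lift = M := by
    intro M hM
    have hex : ∀ i j, ∃ a : ZMod p, c * ((a.val : ℕ) : ZMod (p ^ (m + 1))) = M i j := by
      intro i j
      refine aux_lift (M i j) (aux_dvd_val (M i j) (pow_dvd_pow p (Nat.le_succ m)) ?_)
      have := congrFun (congrFun hM i) j
      simpa [Matrix.map_apply, hπm] using this
    choose A hA using hex
    refine ⟨Matrix.of A, ?_⟩
    ext i j
    simpa [Matrix.map_apply, hlift] using hA i j
  -- the difference matrices
  have hDred : ∀ σ : G, (ρ σ * ρ' σ⁻¹ - 1).map πm = 0 := by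
    intro σ
    have : (ρ σ * ρ' σ⁻¹).map πm = 1 := by
      rw [show (ρ σ * ρ' σ⁻¹).map ⇑πm = (ρ σ).map ⇑πm * (ρ' σ⁻¹).map ⇑πm from Matrix.map_mul,
        hred σ, ← Matrix.map_mul, hρ'inv σ]
      simp
    rw [mapm_sub, this, mapm_one, sub_self]
  have hDex : ∀ σ : G, ∃ A : Matrix (Fin 4) (Fin 4) (ZMod p),
      c • A.map lift = ρ σ * ρ' σ⁻¹ - 1 := fun σ => h2M _ (hDred σ)
  choose Hf hHf using hDex
  -- key: condition (2) holds for a function h iff `c • (h σ).map lift = ρ σ * ρ' σ⁻¹ - 1`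
  have hcond : ∀ (A : Matrix (Fin 4) (Fin 4) (ZMod p)) (σ : G),
      (ρ σ = (1 + c • A.map lift) * ρ' σ) ↔ c • A.map lift = ρ σ * ρ' σ⁻¹ - 1 := by
    intro A σ
    constructor
    · intro h
      have : ρ σ * ρ' σ⁻¹ = (1 + c • A.map lift) * (ρ' σ * ρ' σ⁻¹) := by
        rw [h, mul_assoc]
      rw [hρ'inv σ, mul_one] at this
      rw [this, add_sub_cancel_left]
    · intro h
      have hD : ρ σ * ρ' σ⁻¹ = 1 + c • A.map lift := by rw [h]; abel
      calc ρ σ = ρ σ * (ρ' σ⁻¹ * ρ' σ) := by rw [hρ'inv' σ, mul_one]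
        _ = (ρ σ * ρ' σ⁻¹) * ρ' σ := by rw [mul_assoc]
        _ = (1 + c • A.map lift) * ρ' σ := by rw [hD]
  -- condition (2) for Hf
  have hHf2 : ∀ σ : G, ρ σ = (1 + c • (Hf σ).map lift) * ρ' σ :=
    fun σ => (hcond (Hf σ) σ).mpr (hHf σ)
  -- symplectic condition for Hf
  have hHf1 : ∀ σ : G, (Hf σ)ᵀ * Jmat (ZMod p) + Jmat (ZMod p) * Hf σ = 0 := by
    intro σ
    obtain ⟨u, hu1, hu2⟩ := hν σ
    set J := Jmat (ZMod (p ^ (m + 1))) with hJ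
    set P := ρ' σ with hP
    set Q := ρ' σ⁻¹ with hQ
    set D := 1 + c • (Hf σ).map lift with hD
    have hPQ : P * Q = 1 := hρ'inv σ
    have hQP : Q * P = 1 := hρ'inv' σ
    have hQPt : Qᵀ * Pᵀ = 1 := by rw [← transpose_mul, hPQ, transpose_one]
    have e1 : Pᵀ * (Dᵀ * J * D) * P = Pᵀ * J * P := by
      calc Pᵀ * (Dᵀ * J * D) * P = (D * P)ᵀ * J * (D * P) := by
            rw [transpose_mul]; noncomm_ring
        _ = (ρ σ)ᵀ * J * ρ σ := by rw [← hHf2 σ]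
        _ = Pᵀ * J * P := by rw [hu1, hu2]
    have cancelLR : ∀ Y : Matrix (Fin 4) (Fin 4) (ZMod (p ^ (m + 1))),
        Qᵀ * (Pᵀ * Y * P) * Q = Y := by
      intro Y
      calc Qᵀ * (Pᵀ * Y * P) * Q = (Qᵀ * Pᵀ) * Y * (P * Q) := by noncomm_ring
        _ = Y := by rw [hQPt, hPQ, one_mul, mul_one]
    have e2 : Dᵀ * J * D = J := by
      have := congrArg (fun Y => Qᵀ * Y * Q) e1
      simpa only [cancelLR] using this
    -- expand
    have e3 : J + c • (((Hf σ).map lift)ᵀ * J + J * (Hf σ).map lift) = J := by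
      have expand : Dᵀ * J * D
          = J + c • (((Hf σ).map lift)ᵀ * J + J * (Hf σ).map lift)
            + (c * c) • (((Hf σ).map lift)ᵀ * J * (Hf σ).map lift) := by
        rw [hD]
        simp only [transpose_add, transpose_one, transpose_smul, add_mul, mul_add,
          one_mul, mul_one, smul_mul_assoc, mul_smul_comm, smul_smul, smul_add]
        abel
      rw [expand, hcsq, zero_smul, add_zero] at e2
      exact e2
    have e4 : c • (((Hf σ).map lift)ᵀ * J + J * (Hf σ).map lift) = 0 := by
      have := congrArg (fun Y => Y - J) e3
      simpa using this
    have e5 := h1M _ e4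
    rw [show (((Hf σ).map lift)ᵀ * J + J * (Hf σ).map lift).map ⇑π
        = ((((Hf σ).map lift).map ⇑π)ᵀ * J.map ⇑π + J.map ⇑π * ((Hf σ).map lift).map ⇑π) by
      rw [mapm_add, Matrix.map_mul, Matrix.map_mul, Matrix.transpose_map]] at e5
    rwa [hπliftM, hπJ] at e5
  -- reduction mod p of ρ and ρ' agree; inverse facts
  have hπfactor : ∀ x : ZMod (p ^ (m + 1)), π x =
      ZMod.castHom (dvd_pow_self p (by omega : m ≠ 0)) (ZMod p) (πm x) := by
    intro x
    rw [hπ, hπm, ← RingHom.comp_apply, ZMod.castHom_comp]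
  have hredp : ∀ σ : G, (ρ σ).map π = (ρ' σ).map π := by
    intro σ
    ext i j
    have := congrFun (congrFun (hred σ) i) j
    simp only [Matrix.map_apply] at this ⊢
    rw [hπfactor, hπfactor, this]
  have hmapmul : ∀ A B : Matrix (Fin 4) (Fin 4) (ZMod (p ^ (m + 1))),
      (A * B).map π = A.map π * B.map π := fun A B => Matrix.map_mul
  have hinvρ : ∀ σ : G, ((ρ σ).map π)⁻¹ = (ρ σ⁻¹).map π := by
    intro σ
    apply Matrix.inv_eq_right_inv
    rw [← hmapmul, hρinv σ]
    exact mapm_one π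
  constructor
  · -- existence and uniqueness
    refine ⟨Hf, ⟨hHf1, hHf2⟩, ?_⟩
    intro h ⟨_, h2⟩
    funext σ
    exact hcancelLift _ _ (((hcond (h σ) σ).mp (h2 σ)).trans (hHf σ).symm)
  · -- cocycle property
    intro h ⟨_, h2⟩ σ τ
    have hDh : ∀ υ : G, c • (h υ).map lift = ρ υ * ρ' υ⁻¹ - 1 :=
      fun υ => (hcond (h υ) υ).mp (h2 υ)
    have hDh' : ∀ υ : G, ρ υ * ρ' υ⁻¹ = 1 + c • (h υ).map lift := by
      intro υ; rw [hDh υ]; abel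
    have hkey : c • (h (σ * τ)).map lift
        = c • ((h σ).map lift + ρ' σ * (h τ).map lift * ρ' σ⁻¹) := by
      have e0 : 1 + c • (h (σ * τ)).map lift
          = 1 + c • ((h σ).map lift + ρ' σ * (h τ).map lift * ρ' σ⁻¹) := by
        calc 1 + c • (h (σ * τ)).map lift
            = ρ (σ * τ) * ρ' (σ * τ)⁻¹ := (hDh' (σ * τ)).symm
          _ = (ρ σ * ρ' σ⁻¹) * (ρ' σ * ((ρ τ * ρ' τ⁻¹) * ρ' σ⁻¹)) := by
              rw [hρmul, _root_.mul_inv_rev, hρ'mul]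
              calc ρ σ * ρ τ * (ρ' τ⁻¹ * ρ' σ⁻¹)
                  = ρ σ * ((ρ' σ⁻¹ * ρ' σ) * (ρ τ * (ρ' τ⁻¹ * ρ' σ⁻¹))) := by
                    rw [hρ'inv' σ, one_mul]
                    noncomm_ring
                _ = (ρ σ * ρ' σ⁻¹) * (ρ' σ * ((ρ τ * ρ' τ⁻¹) * ρ' σ⁻¹)) := by
                    noncomm_ring
          _ = (1 + c • (h σ).map lift) * (ρ' σ * ((1 + c • (h τ).map lift) * ρ' σ⁻¹)) := by
              rw [hDh' σ, hDh' τ]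
          _ = 1 + c • ((h σ).map lift + ρ' σ * (h τ).map lift * ρ' σ⁻¹) := by
              simp only [mul_add, add_mul, one_mul, mul_one, smul_mul_assoc,
                mul_smul_comm, smul_smul, hcsq, zero_smul, add_zero, smul_add,
                mul_assoc, hρ'inv σ]
              abel
      exact add_left_cancel e0
    have hfin := hcancel _ _ hkey
    rw [hπliftM] at hfin
    rw [show ((h σ).map lift + ρ' σ * (h τ).map lift * ρ' σ⁻¹).map ⇑π
        = ((h σ).map lift).map ⇑π
          + (ρ' σ).map ⇑π * ((h τ).map lift).map ⇑π * (ρ' σ⁻¹).map ⇑π by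
      rw [mapm_add, Matrix.map_mul, Matrix.map_mul]] at hfin
    rw [hπliftM, hπliftM] at hfin
    rw [hfin, hinvρ σ, ← hredp σ, ← hredp σ⁻¹, hπ]
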